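/- Suppose F: [0,∞) → ℝ satisfies F(t) = sup_{v≥0}(tv − L₁ B v^{3/2} − L₂ v^{5/2}) with constants L₁ ≥ 0, B ≥ 0, 0 < L₂ < 1, and suppose ρ ≥ 0 is integrable on ℝ³ and satisfies ∫ (ρ f − L₁ B f^{3/2} − L₂ f^{5/2}) dx ≤ C for all 0 ≤ f ∈ L^{3/2}(ℝ³) ∩ L^{5/2}(ℝ³) with a constant C independent of f. Then, choosing f_M = (ρ 1_{ρ≤M})^{2/3}, one obtains (1−L₂) ∫_{{ρ≤M}} ρ^{5/3} dx ≤ C + L₁ B ∫_{{ρ≤M}} ρ dx for every M, and hence ρ ∈ L^{5/3}(ℝ³). -/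

import Mathlib

open MeasureTheory Real

section Aux
open scoped ENNReal
variable {α : Type*} [MeasurableSpace α] {μ : Measure α}

private lemma memLp_of_int {f : α → ℝ} (p : ℝ≥0∞) (hp0 : p ≠ 0) (hpt : p ≠ ∞)
    (hf : AEStronglyMeasurable f μ)
    (h : Integrable (fun x => ‖f x‖ ^ p.toReal) μ) : MemLp f p μ := by
  have := (memLp_norm_rpow_iff (p := p) (q := p) hf hp0 hpt)
  rw [ENNReal.div_self hp0 hpt, memLp_one_iff_integrable] at this
  exact this.1 h

private lemma rpow53 {x : ℝ} (hx : 0 ≤ x) : x ^ ((5:ℝ)/3) = x ^ ((2:ℝ)/3) * x := by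
  rw [show (5:ℝ)/3 = 2/3 + 1 by norm_num, Real.rpow_add' hx (by norm_num), Real.rpow_one]

private lemma rpow2332 {x : ℝ} (hx : 0 ≤ x) : (x ^ ((2:ℝ)/3)) ^ ((3:ℝ)/2) = x := by
  rw [← Real.rpow_mul hx, show (2:ℝ)/3 * (3/2) = 1 by norm_num, Real.rpow_one]

private lemma rpow2352 {x : ℝ} (hx : 0 ≤ x) : (x ^ ((2:ℝ)/3)) ^ ((5:ℝ)/2) = x ^ ((5:ℝ)/3) := by
  rw [← Real.rpow_mul hx]; norm_num

private lemma I2_int {g : α → ℝ} {M : ℝ} (hgm : Measurable g) (hg0 : ∀ x, 0 ≤ g x)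
    (hgint : Integrable g μ) :
    Integrable (fun x => if g x ≤ M then g x else 0) μ := by
  refine hgint.mono' ?_ (Filter.Eventually.of_forall fun x => ?_)
  · exact ((hgm.ite (measurableSet_le hgm measurable_const) measurable_const)).aestronglyMeasurable
  · rw [Real.norm_eq_abs]
    by_cases h : g x ≤ M
    · rw [if_pos h, abs_of_nonneg (hg0 x)]
    · rw [if_neg h, abs_zero]; exact hg0 x

private lemma I1_int {g : α → ℝ} {M : ℝ} (hgm : Measurable g) (hg0 : ∀ x, 0 ≤ g x)
    (hgint : Integrable g μ) (hM : 0 ≤ M) :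
    Integrable (fun x => if g x ≤ M then g x ^ ((5:ℝ)/3) else 0) μ := by
  refine (hgint.const_mul (M ^ ((2:ℝ)/3))).mono' ?_ (Filter.Eventually.of_forall fun x => ?_)
  · have : Measurable fun x => g x ^ ((5:ℝ)/3) := by fun_prop
    exact (this.ite (measurableSet_le hgm measurable_const) measurable_const).aestronglyMeasurable
  · rw [Real.norm_eq_abs]
    by_cases h : g x ≤ M
    · rw [if_pos h, abs_of_nonneg (Real.rpow_nonneg (hg0 x) _), rpow53 (hg0 x)]
      exact mul_le_mul_of_nonneg_right (Real.rpow_le_rpow (hg0 x) h (by norm_num)) (hg0 x)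
    · rw [if_neg h, abs_zero]
      exact mul_nonneg (Real.rpow_nonneg hM _) (hg0 x)

private lemma key {g : α → ℝ} {M L₁ L₂ B C : ℝ} (hgm : Measurable g) (hg0 : ∀ x, 0 ≤ g x)
    (hgint : Integrable g μ) (hM : 0 ≤ M) (hL₁B : 0 ≤ L₁ * B)
    (hC : ∫ x, ((if g x ≤ M then g x ^ ((5:ℝ)/3) else 0)
          - L₁ * B * (if g x ≤ M then g x else 0)
          - L₂ * (if g x ≤ M then g x ^ ((5:ℝ)/3) else 0)) ∂μ ≤ C) :
    (1 - L₂) * ∫ x, (if g x ≤ M then g x ^ ((5:ℝ)/3) else 0) ∂μ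
      ≤ C + L₁ * B * ∫ x, (if g x ≤ M then g x else 0) ∂μ := by
  have h1 := I1_int hgm hg0 hgint hM
  have h2 := I2_int (M := M) hgm hg0 hgint
  have e1 : ∫ x, ((if g x ≤ M then g x ^ ((5:ℝ)/3) else 0)
          - L₁ * B * (if g x ≤ M then g x else 0)
          - L₂ * (if g x ≤ M then g x ^ ((5:ℝ)/3) else 0)) ∂μ
      = ((∫ x, (if g x ≤ M then g x ^ ((5:ℝ)/3) else 0) ∂μ)
          - L₁ * B * ∫ x, (if g x ≤ M then g x else 0) ∂μ)
          - L₂ * ∫ x, (if g x ≤ M then g x ^ ((5:ℝ)/3) else 0) ∂μ := by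
    rw [integral_sub (f := fun x => (if g x ≤ M then g x ^ ((5:ℝ)/3) else 0)
            - L₁ * B * (if g x ≤ M then g x else 0))
          (g := fun x => L₂ * (if g x ≤ M then g x ^ ((5:ℝ)/3) else 0))
          (h1.sub (h2.const_mul (L₁ * B))) (h1.const_mul L₂),
        integral_sub (f := fun x => (if g x ≤ M then g x ^ ((5:ℝ)/3) else 0))
          (g := fun x => L₁ * B * (if g x ≤ M then g x else 0))
          h1 (h2.const_mul (L₁ * B)), integral_const_mul, integral_const_mul]
  rw [e1] at hC
  nlinarith [hC]

end Aux

/-- From a Lieb–Thirring-type dual bound to `L^{5/3}` integrability of the density: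
if `ρ ≥ 0` is integrable on `ℝ³` and `∫ (ρ f − L₁ B f^{3/2} − L₂ f^{5/2}) ≤ C` for all
nonnegative `f ∈ L^{3/2} ∩ L^{5/2}`, with `0 < L₂ < 1`, then for every `M > 0`
`(1 − L₂) ∫_{ρ≤M} ρ^{5/3} ≤ C + L₁ B ∫_{ρ≤M} ρ`, and hence `ρ ∈ L^{5/3}(ℝ³)`. -/
theorem density_L53_from_dual_LT_bound
    (F : ℝ → ℝ) (L₁ L₂ B C : ℝ) (hL₁ : 0 ≤ L₁) (hB : 0 ≤ B) (hL₂0 : 0 < L₂) (hL₂1 : L₂ < 1)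
    (hF : ∀ t : ℝ, 0 ≤ t →
      F t = sSup {y : ℝ | ∃ v : ℝ, 0 ≤ v ∧
        y = t * v - L₁ * B * v ^ ((3 : ℝ) / 2) - L₂ * v ^ ((5 : ℝ) / 2)})
    (ρ : EuclideanSpace ℝ (Fin 3) → ℝ) (hρ0 : ∀ x, 0 ≤ ρ x) (hρint : Integrable ρ)
    (hdual : ∀ f : EuclideanSpace ℝ (Fin 3) → ℝ, (∀ x, 0 ≤ f x) →
      MemLp f (ENNReal.ofReal ((3 : ℝ) / 2)) (volume : Measure (EuclideanSpace ℝ (Fin 3))) →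
      MemLp f (ENNReal.ofReal ((5 : ℝ) / 2)) (volume : Measure (EuclideanSpace ℝ (Fin 3))) →
      ∫ x, (ρ x * f x - L₁ * B * f x ^ ((3 : ℝ) / 2) - L₂ * f x ^ ((5 : ℝ) / 2)) ≤ C) :
    (∀ M : ℝ, 0 < M →
      (1 - L₂) * ∫ x in {x | ρ x ≤ M}, ρ x ^ ((5 : ℝ) / 3)
        ≤ C + L₁ * B * ∫ x in {x | ρ x ≤ M}, ρ x) ∧
    MemLp ρ (ENNReal.ofReal ((5 : ℝ) / 3)) (volume : Measure (EuclideanSpace ℝ (Fin 3))) := by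
  have hmeas := hρint.aestronglyMeasurable
  set g : EuclideanSpace ℝ (Fin 3) → ℝ := fun x => max (hmeas.mk ρ x) 0 with hgdef
  have hgm : Measurable g := hmeas.stronglyMeasurable_mk.measurable.max measurable_const
  have hg0 : ∀ x, 0 ≤ g x := fun x => le_max_right _ _
  have hρg : ρ =ᵐ[volume] g := by
    filter_upwards [hmeas.ae_eq_mk] with x hx
    rw [hgdef]; simp only [← hx, max_eq_left (hρ0 x)]
  have hgint : Integrable g := hρint.congr hρg
  have hL₁B : 0 ≤ L₁ * B := mul_nonneg hL₁ hB
  -- the main estimate for each M ≥ 0, in terms of g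
  have main : ∀ M : ℝ, 0 ≤ M →
      (1 - L₂) * ∫ x, (if g x ≤ M then g x ^ ((5:ℝ)/3) else 0)
        ≤ C + L₁ * B * ∫ x, (if g x ≤ M then g x else 0) := by
    intro M hM
    set f : EuclideanSpace ℝ (Fin 3) → ℝ := fun x => if g x ≤ M then g x ^ ((2:ℝ)/3) else 0
      with hfdef
    have hf0 : ∀ x, 0 ≤ f x := by
      intro x
      show 0 ≤ if g x ≤ M then g x ^ ((2:ℝ)/3) else 0
      by_cases h : g x ≤ M
      · rw [if_pos h]; exact Real.rpow_nonneg (hg0 x) _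
      · rw [if_neg h]
    have hf32 : ∀ x, f x ^ ((3:ℝ)/2) = if g x ≤ M then g x else 0 := by
      intro x
      show (if g x ≤ M then g x ^ ((2:ℝ)/3) else 0) ^ ((3:ℝ)/2) = _
      by_cases h : g x ≤ M
      · rw [if_pos h, if_pos h, rpow2332 (hg0 x)]
      · rw [if_neg h, if_neg h, Real.zero_rpow (by norm_num)]
    have hf52 : ∀ x, f x ^ ((5:ℝ)/2) = if g x ≤ M then g x ^ ((5:ℝ)/3) else 0 := by
      intro x
      show (if g x ≤ M then g x ^ ((2:ℝ)/3) else 0) ^ ((5:ℝ)/2) = _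
      by_cases h : g x ≤ M
      · rw [if_pos h, if_pos h, rpow2352 (hg0 x)]
      · rw [if_neg h, if_neg h, Real.zero_rpow (by norm_num)]
    have hgf : ∀ x, g x * f x = if g x ≤ M then g x ^ ((5:ℝ)/3) else 0 := by
      intro x
      show g x * (if g x ≤ M then g x ^ ((2:ℝ)/3) else 0) = _
      by_cases h : g x ≤ M
      · rw [if_pos h, if_pos h, rpow53 (hg0 x)]; ring
      · rw [if_neg h, if_neg h, mul_zero]
    have hfm : Measurable f := by
      have : Measurable fun x => g x ^ ((2:ℝ)/3) := by fun_prop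
      exact this.ite (measurableSet_le hgm measurable_const) measurable_const
    have h2 := I2_int (M := M) (μ := volume) hgm hg0 hgint
    have h1 := I1_int (M := M) (μ := volume) hgm hg0 hgint hM
    have hmem32 : MemLp f (ENNReal.ofReal ((3:ℝ)/2)) volume := by
      refine memLp_of_int _ (by simp [ENNReal.ofReal_eq_zero]) ENNReal.ofReal_ne_top
        hfm.aestronglyMeasurable ?_
      rw [ENNReal.toReal_ofReal (by norm_num : (0:ℝ) ≤ 3/2)]
      refine h2.congr (Filter.Eventually.of_forall fun x => ?_)
      show (if g x ≤ M then g x else 0) = ‖f x‖ ^ ((3:ℝ)/2)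
      rw [Real.norm_eq_abs, abs_of_nonneg (hf0 x), hf32 x]
    have hmem52 : MemLp f (ENNReal.ofReal ((5:ℝ)/2)) volume := by
      refine memLp_of_int _ (by simp [ENNReal.ofReal_eq_zero]) ENNReal.ofReal_ne_top
        hfm.aestronglyMeasurable ?_
      rw [ENNReal.toReal_ofReal (by norm_num : (0:ℝ) ≤ 5/2)]
      refine h1.congr (Filter.Eventually.of_forall fun x => ?_)
      show (if g x ≤ M then g x ^ ((5:ℝ)/3) else 0) = ‖f x‖ ^ ((5:ℝ)/2)
      rw [Real.norm_eq_abs, abs_of_nonneg (hf0 x), hf52 x]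
    have hC := hdual f hf0 hmem32 hmem52
    have heq : ∫ x, (ρ x * f x - L₁ * B * f x ^ ((3:ℝ)/2) - L₂ * f x ^ ((5:ℝ)/2))
        = ∫ x, ((if g x ≤ M then g x ^ ((5:ℝ)/3) else 0)
            - L₁ * B * (if g x ≤ M then g x else 0)
            - L₂ * (if g x ≤ M then g x ^ ((5:ℝ)/3) else 0)) := by
      refine integral_congr_ae ?_
      filter_upwards [hρg] with x hx
      rw [hx, hgf x, hf32 x, hf52 x]
    rw [heq] at hC
    exact key hgm hg0 hgint hM hL₁B hC
  -- identify the truncated integrals with set integrals over {ρ ≤ M}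
  have conv : ∀ (M : ℝ) (u v : EuclideanSpace ℝ (Fin 3) → ℝ), (v =ᵐ[volume] u) →
      ∫ x, (if g x ≤ M then u x else 0) = ∫ x in {x | ρ x ≤ M}, v x := by
    intro M u v huv
    have hs : MeasurableSet {x | g x ≤ M} := measurableSet_le hgm measurable_const
    have e1 : ∫ x, (if g x ≤ M then u x else 0) = ∫ x in {x | g x ≤ M}, u x := by
      rw [← integral_indicator hs]
      simp only [Set.indicator_apply, Set.mem_setOf_eq]
    have hset : {x | ρ x ≤ M} =ᵐ[volume] {x | g x ≤ M} := by
      rw [Filter.eventuallyEq_set]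
      filter_upwards [hρg] with x hx
      simp only [Set.mem_setOf_eq, hx]
    rw [e1, ← Measure.restrict_congr_set hset]
    exact (integral_congr_ae (ae_restrict_of_ae huv)).symm
  have h1L2 : 0 < 1 - L₂ := by linarith
  set K := (C + L₁ * B * ∫ x, g x) / (1 - L₂) with hKdef
  have hK : ∀ n : ℕ, ∫ x, (if g x ≤ (n:ℝ) then g x ^ ((5:ℝ)/3) else 0) ≤ K := by
    intro n
    have hm := main n (Nat.cast_nonneg n)
    have hle : ∫ x, (if g x ≤ (n:ℝ) then g x else 0) ≤ ∫ x, g x := by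
      refine integral_mono (I2_int hgm hg0 hgint) hgint fun x => ?_
      by_cases h : g x ≤ (n:ℝ)
      · rw [if_pos h]
      · rw [if_neg h]; exact hg0 x
    rw [hKdef, le_div_iff₀ h1L2]
    nlinarith [hm, hle]
  have hmeasn : ∀ n : ℕ, Measurable fun x =>
      ENNReal.ofReal (if g x ≤ (n:ℝ) then g x ^ ((5:ℝ)/3) else 0) := by
    intro n
    have hh : Measurable fun x => g x ^ ((5:ℝ)/3) := by fun_prop
    exact (hh.ite (measurableSet_le hgm measurable_const) measurable_const).ennreal_ofReal
  have hmono : Monotone fun (n : ℕ) => fun x =>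
      ENNReal.ofReal (if g x ≤ (n:ℝ) then g x ^ ((5:ℝ)/3) else 0) := by
    intro n m hnm x
    apply ENNReal.ofReal_le_ofReal
    by_cases h : g x ≤ (n:ℝ)
    · rw [if_pos h, if_pos (h.trans (Nat.cast_le.2 hnm))]
    · rw [if_neg h]
      by_cases h2 : g x ≤ (m:ℝ)
      · rw [if_pos h2]; exact Real.rpow_nonneg (hg0 x) _
      · rw [if_neg h2]
  have hbound : ∫⁻ x, ENNReal.ofReal (g x ^ ((5:ℝ)/3)) ≤ ENNReal.ofReal K := by
    have hptsup : ∀ x, (⨆ n : ℕ,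
        ENNReal.ofReal (if g x ≤ (n:ℝ) then g x ^ ((5:ℝ)/3) else 0))
          = ENNReal.ofReal (g x ^ ((5:ℝ)/3)) := by
      intro x
      apply le_antisymm
      · refine iSup_le fun n => ENNReal.ofReal_le_ofReal ?_
        by_cases h : g x ≤ (n:ℝ)
        · rw [if_pos h]
        · rw [if_neg h]; exact Real.rpow_nonneg (hg0 x) _
      · obtain ⟨n, hn⟩ := exists_nat_ge (g x)
        exact le_iSup_of_le n (by rw [if_pos hn])
    calc ∫⁻ x, ENNReal.ofReal (g x ^ ((5:ℝ)/3))
        = ∫⁻ x, ⨆ n : ℕ, ENNReal.ofReal (if g x ≤ (n:ℝ) then g x ^ ((5:ℝ)/3) else 0) :=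
          lintegral_congr fun x => (hptsup x).symm
      _ = ⨆ n : ℕ, ∫⁻ x, ENNReal.ofReal (if g x ≤ (n:ℝ) then g x ^ ((5:ℝ)/3) else 0) :=
          lintegral_iSup hmeasn hmono
      _ ≤ ENNReal.ofReal K := by
          refine iSup_le fun n => ?_
          have hnn : (0 : EuclideanSpace ℝ (Fin 3) → ℝ)
              ≤ᵐ[volume] fun x => if g x ≤ (n:ℝ) then g x ^ ((5:ℝ)/3) else 0 := by
            refine Filter.Eventually.of_forall fun x => ?_
            show (0:ℝ) ≤ if g x ≤ (n:ℝ) then g x ^ ((5:ℝ)/3) else 0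
            by_cases h : g x ≤ (n:ℝ)
            · rw [if_pos h]; exact Real.rpow_nonneg (hg0 x) _
            · rw [if_neg h]
          rw [← ofReal_integral_eq_lintegral_ofReal
            (I1_int hgm hg0 hgint (Nat.cast_nonneg n)) hnn]
          exact ENNReal.ofReal_le_ofReal (hK n)
  have hIg53 : Integrable (fun x => g x ^ ((5:ℝ)/3)) := by
    constructor
    · exact (show Measurable fun x => g x ^ ((5:ℝ)/3) by fun_prop).aestronglyMeasurable
    · rw [hasFiniteIntegral_iff_ofReal
        (Filter.Eventually.of_forall fun x => Real.rpow_nonneg (hg0 x) _)]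
      exact lt_of_le_of_lt hbound ENNReal.ofReal_lt_top
  constructor
  · intro M hM
    rw [← conv M (fun x => g x ^ ((5:ℝ)/3)) (fun x => ρ x ^ ((5:ℝ)/3))
        (by filter_upwards [hρg] with x hx; rw [hx]),
      ← conv M g ρ hρg]
    exact main M hM.le
  · refine memLp_of_int _ (by simp [ENNReal.ofReal_eq_zero]) ENNReal.ofReal_ne_top
      hmeas ?_
    rw [ENNReal.toReal_ofReal (by norm_num : (0:ℝ) ≤ 5/3)]
    refine hIg53.congr ?_
    filter_upwards [hρg] with x hx
    rw [Real.norm_eq_abs, abs_of_nonneg (hρ0 x), hx]
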